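/- arXiv:1711.08258 — 2 statements merged into one kernel-verified Lean document; each statement's English description precedes it below -/
import Mathlib

section
/- Let D be a special polyhedra system, J ∈ Sing(D), and let J' ∈ H'_∞ be a stratum of the blow-up π_J(F), with K = π_J^#(J'). If T(Δ_K) = J, then J' is not a singular stratum of the characteristic transform Λ_J(D). -/
open scoped Pointwise

namespace RedSing

/-! ### Vectors and polyhedra.
A vector "in `ℝ^J`" is a function `ℕ → ℝ` supported on the finite set `J`. -/

abbrev Vec : Type := ℕ → ℝ

/-- The cone `ℝ_{≥0}^J` of nonnegative vectors supported on `J`. -/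
def suppCone (J : Finset ℕ) : Set Vec :=
  {σ | (∀ j, 0 ≤ σ j) ∧ ∀ j, j ∉ J → σ j = 0}

/-- Positive convex hull `[[A]] = convexHull (A + ℝ_{≥0}^J)`. -/
noncomputable def posHull (J : Finset ℕ) (A : Set Vec) : Set Vec :=
  convexHull ℝ (A + suppCone J)

/-- The lattice points `(1/d)·ℤ_{≥0}^J`. -/
def latticePts (J : Finset ℕ) (d : ℕ) : Set Vec :=
  {σ | σ ∈ suppCone J ∧ ∀ j, ∃ m : ℕ, σ j = (m : ℝ) / (d : ℝ)}

/-- `Δ ⊆ ℝ_{≥0}^J` is a characteristic polyhedron with denominator `d`. -/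
def IsCharPoly (J : Finset ℕ) (d : ℕ) (Δ : Set Vec) : Prop :=
  ∃ A, A ⊆ latticePts J d ∧ Δ = posHull J A

/-! ### Support fabrics -/

/-- A support fabric: a nonempty finite index set `I` together with a
downward-closed family `H` of subsets of `I` (the strata). -/
structure Fabric where
  I : Finset ℕ
  I_nonempty : I.Nonempty
  H : Set (Finset ℕ)
  mem_sub : ∀ J ∈ H, J ⊆ I
  downward : ∀ J ∈ H, ∀ J' ⊆ J, J' ∈ H

/-- Dimension of a support fabric: the maximal cardinality of a stratum. -/
noncomputable def Fabric.dim (F : Fabric) : ℕ :=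
  sSup {n | ∃ J ∈ F.H, J.card = n}

/-- The Zariski topology on finsets: the open sets are the downward-closed families;
subsets such as the strata set `H` carry the subspace topology. -/
instance zariskiTopology : TopologicalSpace (Finset ℕ) where
  IsOpen U := ∀ J ∈ U, ∀ J' ⊆ J, J' ∈ U
  isOpen_univ := fun J _ J' _ => Set.mem_univ J'
  isOpen_inter := fun s t hs ht J hJ J' hJ' => ⟨hs J hJ.1 J' hJ', ht J hJ.2 J' hJ'⟩
  isOpen_sUnion := fun S hS J hJ J' hJ' => by
    obtain ⟨t, htS, hJt⟩ := hJ
    exact ⟨t, htS, hS t htS J hJt J' hJ'⟩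

/-! ### Polyhedra systems -/

/-- A polyhedra system over a support fabric: a nonempty characteristic polyhedron
with denominator `d` for each stratum, compatible with the projections
(restriction of functions). -/
structure PolySys where
  F : Fabric
  d : ℕ
  d_pos : 0 < d
  Δ : Finset ℕ → Set Vec
  char : ∀ J ∈ F.H, IsCharPoly J d (Δ J)
  nonempty : ∀ J ∈ F.H, (Δ J).Nonempty
  compat : ∀ J₁ ∈ F.H, ∀ J₂ ∈ F.H, J₁ ⊆ J₂ →
    Δ J₁ = (fun σ => fun j => if j ∈ J₁ then σ j else 0) '' Δ J₂

/-- Contact exponent `δ(Δ) = min {|σ| : σ ∈ Δ}` (with the convention `δ = -1`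
for the empty index set). -/
noncomputable def contactExp (J : Finset ℕ) (Δ : Set Vec) : ℝ :=
  if J = (∅ : Finset ℕ) then -1 else sInf ((fun σ => ∑ j ∈ J, σ j) '' Δ)

/-- Singular locus: strata with contact exponent at least 1. -/
def Sing (D : PolySys) : Set (Finset ℕ) :=
  {J | J ∈ D.F.H ∧ 1 ≤ contactExp J (D.Δ J)}

/-- `D` is special: `δ(D) = max {δ(Δ_J)} = 1`. -/
def IsSpecial (D : PolySys) : Prop :=
  (∀ J ∈ D.F.H, contactExp J (D.Δ J) ≤ 1) ∧ ∃ J ∈ D.F.H, contactExp J (D.Δ J) = 1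

/-! ### Blow-ups and transforms -/

/-- The strata of the blow-up centered in `J`, with new index `inf` (playing `∞`). -/
def blowupH (H : Set (Finset ℕ)) (J : Finset ℕ) (inf : ℕ) : Set (Finset ℕ) :=
  {K | K ∈ H ∧ ¬ J ⊆ K} ∪
    {J' | ∃ K, (K ∈ H ∧ J ⊆ K) ∧ ∃ A, A ⊂ J ∧ J' = (K \ J) ∪ A ∪ {inf}}

/-- The map `π_J^#` from the strata of the blow-up to the strata of `F`. -/
def blowdown (J : Finset ℕ) (inf : ℕ) (J' : Finset ℕ) : Finset ℕ :=
  if inf ∈ J' then (J'.erase inf) ∪ J else J'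

/-- The map `λ_{J'} : ℝ^K → ℝ^{J'}`. -/
noncomputable def lamMap (J J' : Finset ℕ) (inf : ℕ) (σ : Vec) : Vec :=
  fun j => if j = inf then ∑ i ∈ J, σ i else if j ∈ J' then σ j else 0

/-- The indicator vector `e_{J',∞}` of the new index. -/
def eVec (inf : ℕ) : Vec := fun j => if j = inf then 1 else 0

/-- The polyhedron `Δ⁰_{J'}` of the total transform at a stratum `J'` of the blow-up. -/
noncomputable def totalΔ (D : PolySys) (J : Finset ℕ) (inf : ℕ) (J' : Finset ℕ) : Set Vec :=
  if inf ∈ J' then posHull J' (lamMap J J' inf '' D.Δ (blowdown J inf J'))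
  else D.Δ J'

/-- The polyhedron `Δ'_{J'} = Δ⁰_{J'} - e_{J',∞}` of the characteristic transform
(`e_{J',∞} = 0` when `∞ ∉ J'`). -/
noncomputable def charΔ (D : PolySys) (J : Finset ℕ) (inf : ℕ) (J' : Finset ℕ) : Set Vec :=
  if inf ∈ J' then
    (fun σ => σ - eVec inf) '' posHull J' (lamMap J J' inf '' D.Δ (blowdown J inf J'))
  else D.Δ J'

/-- `D'` is the total transform `Λ⁰_J(D)` of `D` centered in the nonempty stratum `J`,
with new index `inf`. -/
def IsTotalTransformAt (D D' : PolySys) (J : Finset ℕ) (inf : ℕ) : Prop :=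
  J ∈ D.F.H ∧ J ≠ ∅ ∧ D'.d = D.d ∧ inf ∉ D.F.I ∧
  D'.F.I = insert inf D.F.I ∧ D'.F.H = blowupH D.F.H J inf ∧
  ∀ J' ∈ D'.F.H, D'.Δ J' = totalΔ D J inf J'

/-- `D'` is a total transform of `D` centered in `J`. -/
def IsTotalTransform (D D' : PolySys) (J : Finset ℕ) : Prop :=
  ∃ inf, IsTotalTransformAt D D' J inf

/-- `D'` is the characteristic transform `Λ_J(D)` of `D` centered in the singular
stratum `J`, with new index `inf`. -/
def IsCharTransformAt (D D' : PolySys) (J : Finset ℕ) (inf : ℕ) : Prop :=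
  J ∈ Sing D ∧ D'.d = D.d ∧ inf ∉ D.F.I ∧
  D'.F.I = insert inf D.F.I ∧ D'.F.H = blowupH D.F.H J inf ∧
  ∀ J' ∈ D'.F.H, D'.Δ J' = charΔ D J inf J'

/-- `D'` is a characteristic transform of `D` centered in `J`. -/
def IsCharTransform (D D' : PolySys) (J : Finset ℕ) : Prop :=
  ∃ inf, IsCharTransformAt D D' J inf

/-- A reduction of singularities of `D`: a finite sequence of characteristic
transforms, each centered in a singular stratum of the previous system, ending
in a system with empty singular locus. -/
def HasReduction (D : PolySys) : Prop :=
  ∃ (k : ℕ) (seq : ℕ → PolySys), seq 0 = D ∧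
    (∀ i, i < k → ∃ J, IsCharTransform (seq i) (seq (i + 1)) J) ∧
    Sing (seq k) = ∅

/-! ### Strict tangent space and maximal contact -/

/-- Hironaka's strict tangent space `T(Δ)` of a polyhedron `Δ ⊆ ℝ_{≥0}^J`. -/
def strictTangent (J : Finset ℕ) (Δ : Set Vec) : Set ℕ :=
  {j | ∃ σ ∈ Δ, (∑ i ∈ J, σ i) = 1 ∧ σ j ≠ 0}

/-- The stratum `T` has maximal contact with the (special) system `D`. -/
def HasMaximalContact (D : PolySys) (T : Finset ℕ) : Prop :=
  T ∈ D.F.H ∧ ∀ J ∈ Sing D, (↑T : Set ℕ) ⊆ strictTangent J (D.Δ J)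

/-! ### Hironaka's projection from a stratum `T` -/

/-- Hironaka's projection `∇_J^T(σ) = σ|_{J∖T} / (1 - Σ_{j∈T} σ(j))`. -/
noncomputable def hironakaProj (T J : Finset ℕ) (σ : Vec) : Vec :=
  fun j => if j ∈ J \ T then σ j / (1 - ∑ i ∈ T, σ i) else 0

/-- The polyhedron `Δ^T_{J*} = ∇_J^T(Δ_J ∩ M_J^T)` of Hironaka's projection,
where `J = J* ∪ T`. -/
noncomputable def projΔ (D : PolySys) (T J' : Finset ℕ) : Set Vec :=
  hironakaProj T (J' ∪ T) '' {σ | σ ∈ D.Δ (J' ∪ T) ∧ (∑ i ∈ T, σ i) < 1}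

/-- The strata `H^T = {J ∖ T : T ⊆ J ∈ H}` of the projected fabric `F^T`. -/
def projH (F : Fabric) (T : Finset ℕ) : Set (Finset ℕ) :=
  {J' | ∃ J, (J ∈ F.H ∧ T ⊆ J) ∧ J' = J \ T}

/-- The singular locus of Hironaka's projection `D^T`. -/
def projSing (D : PolySys) (T : Finset ℕ) : Set (Finset ℕ) :=
  {J' | J' ∈ projH D.F T ∧ (projΔ D T J').Nonempty ∧ 1 ≤ contactExp J' (projΔ D T J')}

/-- `E` is Hironaka's projection `D^T` of `D` from the stratum `T`
(a polyhedra system over `F^T` with denominator `d!·d`). -/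
def IsHironakaProjection (D E : PolySys) (T : Finset ℕ) : Prop :=
  E.F.I = D.F.I \ T ∧ E.F.H = projH D.F T ∧ E.d = Nat.factorial D.d * D.d ∧
  ∀ J' ∈ E.F.H, E.Δ J' = projΔ D T J'

/-! ### Reduction `Red_C` of a system to a closed set `C` of strata -/

/-- The fabric `Red_C(F)`, with strata `H_C = ⋃_{J ∈ C} P(J)`. -/
def Fabric.red (F : Fabric) (C : Set (Finset ℕ)) : Fabric where
  I := F.I
  I_nonempty := F.I_nonempty
  H := {J' | ∃ J, (J ∈ C ∧ J ∈ F.H) ∧ J' ⊆ J}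
  mem_sub := by
    rintro J' ⟨J, ⟨_, hJH⟩, hsub⟩
    exact hsub.trans (F.mem_sub J hJH)
  downward := by
    rintro J' ⟨J, hJ, hsub⟩ J'' hsub'
    exact ⟨J, hJ, hsub'.trans hsub⟩

/-- The reduction `Red_C(D)` of a polyhedra system to a closed set `C ⊆ H`. -/
noncomputable def PolySys.red (D : PolySys) (C : Set (Finset ℕ)) : PolySys where
  F := D.F.red C
  d := D.d
  d_pos := D.d_pos
  Δ := D.Δ
  char := by
    rintro J ⟨K, ⟨_, hK⟩, hsub⟩
    exact D.char J (D.F.downward K hK J hsub)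
  nonempty := by
    rintro J ⟨K, ⟨_, hK⟩, hsub⟩
    exact D.nonempty J (D.F.downward K hK J hsub)
  compat := by
    rintro J₁ ⟨K₁, ⟨_, hK₁⟩, h₁⟩ J₂ ⟨K₂, ⟨_, hK₂⟩, h₂⟩ h12
    exact D.compat J₁ (D.F.downward K₁ hK₁ J₁ h₁) J₂ (D.F.downward K₂ hK₂ J₂ h₂) h12

/-- A special polyhedra system is consistent if for each connected component `C`
of its singular locus there is a stratum having maximal contact with `Red_C(D)`
(non-singular systems are consistent by convention). -/
def IsConsistent (D : PolySys) : Prop :=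
  ∀ x ∈ Sing D, ∃ T, HasMaximalContact (D.red (connectedComponentIn (Sing D) x)) T

/-! ### Fitting and Spivakovsky's invariant -/

/-- The fitting vector `w_Δ(j) = min {σ(j) : σ ∈ Δ}`. -/
noncomputable def fitVec (Δ : Set Vec) : Vec := fun j => sInf ((fun σ => σ j) '' Δ)

/-- The fitting `Δ̃ = Δ - w_Δ`. -/
noncomputable def fitting (Δ : Set Vec) : Set Vec := (fun σ => σ - fitVec Δ) '' Δ

/-- Spivakovsky's invariant `Spi_D = max {δ(Δ̃_J) : J ∈ Sing(D)}`. -/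
noncomputable def spi (D : PolySys) : ℝ :=
  sSup {x | ∃ J ∈ Sing D, contactExp J (fitting (D.Δ J)) = x}

/-- `S(D) = {J ∈ Sing(D) : δ(Δ̃_J) = Spi_D}`. -/
def SSet (D : PolySys) : Set (Finset ℕ) :=
  {J | J ∈ Sing D ∧ contactExp J (fitting (D.Δ J)) = spi D}

/-! ### Moderated transforms, normal crossings, quasi-ordinary systems -/

/-- The polyhedron of the `d`-moderated transform `Θ^d_J(N) = N(Λ_J(N/d))`
at a stratum `J'` of the blow-up. -/
noncomputable def modΔ (N : PolySys) (d : ℕ) (J : Finset ℕ) (inf : ℕ) (J' : Finset ℕ) :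
    Set Vec :=
  if inf ∈ J' then
    (fun σ => σ - (d : ℝ) • eVec inf) ''
      posHull J' (lamMap J J' inf '' N.Δ (blowdown J inf J'))
  else N.Δ J'

/-- `N'` is the `d`-moderated transform `Θ^d_J(N)` of the Newton polyhedra system `N`
centered in a stratum `J` with `δ(N_J) ≥ d`, with new index `inf`. -/
def IsModTransformAt (N N' : PolySys) (d : ℕ) (J : Finset ℕ) (inf : ℕ) : Prop :=
  N.d = 1 ∧ N'.d = 1 ∧ J ∈ N.F.H ∧ (d : ℝ) ≤ contactExp J (N.Δ J) ∧ inf ∉ N.F.I ∧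
  N'.F.I = insert inf N.F.I ∧ N'.F.H = blowupH N.F.H J inf ∧
  ∀ J' ∈ N'.F.H, N'.Δ J' = modΔ N d J inf J'

/-- `N'` is a `d`-moderated transform of `N` centered in `J`. -/
def IsModTransform (N N' : PolySys) (d : ℕ) (J : Finset ℕ) : Prop :=
  ∃ inf, IsModTransformAt N N' d J inf

/-- A Newton polyhedra system has normal crossings if each polyhedron has a
single vertex. -/
def HasNormalCrossings (D : PolySys) : Prop :=
  ∀ J ∈ D.F.H, ∃ σ, D.Δ J = posHull J {σ}

/-- `D` is Hironaka quasi-ordinary: each polyhedron over a singular stratum has a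
single vertex. -/
def IsQuasiOrdinary (D : PolySys) : Prop :=
  ∀ J ∈ Sing D, ∃ σ, D.Δ J = posHull J {σ}

/-! ### Lexicographic order on sequences of naturals -/

/-- Strict lexicographic order on sequences `ℕ → ℕ`. -/
def LexLt (φ ψ : ℕ → ℕ) : Prop := ∃ n, φ n < ψ n ∧ ∀ m < n, φ m = ψ m

/-- A weakly decreasing sequence of naturals. -/
def WeaklyDecr (φ : ℕ → ℕ) : Prop := ∀ n, φ (n + 1) ≤ φ n

/-! Auxiliary lemmas -/

lemma suppCone_convex (J : Finset ℕ) : Convex ℝ (suppCone J) := by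
  intro σ hσ τ hτ a b ha hb hab
  refine ⟨fun j => ?_, fun j hj => ?_⟩
  · have := hσ.1 j; have := hτ.1 j
    have : 0 ≤ a * σ j + b * τ j := by positivity
    simpa using this
  · have h1 := hσ.2 j hj; have h2 := hτ.2 j hj
    simp [h1, h2]

lemma posHull_subset_suppCone (J : Finset ℕ) (A : Set Vec) (hA : A ⊆ suppCone J) :
    posHull J A ⊆ suppCone J := by
  apply convexHull_min _ (suppCone_convex J)
  rintro x ⟨a, ha, c, hc, rfl⟩
  refine ⟨fun j => add_nonneg ((hA ha).1 j) (hc.1 j), fun j hj => ?_⟩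
  simp [(hA ha).2 j hj, hc.2 j hj]

lemma subset_posHull (J : Finset ℕ) (A : Set Vec) : A ⊆ posHull J A := by
  intro x hx
  apply subset_convexHull
  refine ⟨x, hx, 0, ⟨fun j => le_refl 0, fun j _ => rfl⟩, by simp⟩

lemma not_one_le_sInf {S : Set ℝ} {a : ℝ} (ha : a ∈ S) (hlt : a < 1) : ¬ 1 ≤ sInf S := by
  intro h1
  by_cases hb : BddBelow S
  · exact absurd (csInf_le hb ha) (by linarith)
  · rw [Real.sInf_of_not_bddBelow hb] at h1; linarith
/-- If `T(Δ_K) = J` for a stratum `J' ∈ H'_∞` of the blow-up with `K = π_J^#(J')`,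
then `J'` is not a singular stratum of the characteristic transform. -/
theorem full_tangent_space_resolves (D D' : PolySys) (hsp : IsSpecial D)
    (J : Finset ℕ) (inf : ℕ) (h : IsCharTransformAt D D' J inf) (J' : Finset ℕ)
    (hJ' : J' ∈ D'.F.H) (hinf : inf ∈ J')
    (hT : strictTangent (blowdown J inf J') (D.Δ (blowdown J inf J')) = (↑J : Set ℕ)) :
    J' ∉ Sing D' := by
  obtain ⟨hJSing, hd, hinfI, hI, hH, hΔ⟩ := h
  have hJ'H := hJ'
  rw [hH] at hJ'
  rcases hJ' with ⟨hJ'H2, -⟩ | ⟨K, ⟨hKH, hJK⟩, A, hAJ, hJ'eq⟩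
  · exact absurd (D.F.mem_sub J' hJ'H2 hinf) hinfI
  have hinfK : inf ∉ K := fun hc => hinfI (D.F.mem_sub K hKH hc)
  have hAK : A ⊆ K := hAJ.subset.trans hJK
  have hinfJ : inf ∉ J := fun hc => hinfI (D.F.mem_sub J hJSing.1 hc)
  have hinfA : inf ∉ A := fun hc => hinfJ (hAJ.subset hc)
  -- blowdown J inf J' = K
  have hK0 : blowdown J inf J' = K := by
    unfold blowdown
    rw [if_pos hinf]
    subst hJ'eq
    ext j
    simp only [Finset.mem_union, Finset.mem_erase, Finset.mem_sdiff, Finset.mem_singleton]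
    constructor
    · rintro (⟨hne, (⟨hjK, _⟩ | hjA) | hji⟩ | hjJ)
      · exact hjK
      · exact hAK hjA
      · exact absurd hji hne
      · exact hJK hjJ
    · intro hjK
      by_cases hjJ : j ∈ J
      · exact Or.inr hjJ
      · exact Or.inl ⟨fun hc => hinfK (hc ▸ hjK), Or.inl (Or.inl ⟨hjK, hjJ⟩)⟩
  rw [hK0] at hT
  -- pick j₀ ∈ J \ A and a tangent witness σ
  obtain ⟨j₀, hj₀J, hj₀A⟩ := Finset.exists_of_ssubset hAJ
  have hj₀T : j₀ ∈ strictTangent K (D.Δ K) := by rw [hT]; exact_mod_cast hj₀J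
  obtain ⟨σ, hσΔ, hσsum, hσj₀⟩ := hj₀T
  -- nonnegativity of σ
  obtain ⟨B, hB, hΔeq⟩ := D.char K hKH
  have hσnn : σ ∈ suppCone K :=
    posHull_subset_suppCone K B (fun x hx => (hB hx).1) (hΔeq ▸ hσΔ)
  -- the transformed point
  set τ : Vec := lamMap J J' inf σ - eVec inf with hτdef
  have hΔJ' := hΔ J' hJ'H
  have hτmem : τ ∈ D'.Δ J' := by
    rw [hΔJ']
    unfold charΔ
    rw [if_pos hinf, hK0]
    exact ⟨lamMap J J' inf σ, subset_posHull J' _ ⟨σ, hσΔ, rfl⟩, rfl⟩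
  -- compute the sum of τ over J'
  have heraseJ' : J'.erase inf = (K \ J) ∪ A := by
    subst hJ'eq
    ext j
    simp only [Finset.mem_erase, Finset.mem_union, Finset.mem_sdiff, Finset.mem_singleton]
    constructor
    · rintro ⟨hne, (h1 | h2) | h3⟩
      · exact Or.inl h1
      · exact Or.inr h2
      · exact absurd h3 hne
    · rintro (⟨hjK, hjJ⟩ | hjA)
      · exact ⟨fun hc => hinfK (hc ▸ hjK), Or.inl (Or.inl ⟨hjK, hjJ⟩)⟩
      · exact ⟨fun hc => hinfA (hc ▸ hjA), Or.inl (Or.inr hjA)⟩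
  have hdisj : Disjoint (K \ J) A := by
    rw [Finset.disjoint_left]
    intro a ha hc
    exact (Finset.mem_sdiff.mp ha).2 (hAJ.subset hc)
  have hsum_erase : ∑ j ∈ J'.erase inf, σ j = ∑ j ∈ K \ J, σ j + ∑ j ∈ A, σ j := by
    rw [heraseJ', Finset.sum_union hdisj]
  have hKsplit : ∑ j ∈ K \ J, σ j + ∑ j ∈ J, σ j = ∑ j ∈ K, σ j :=
    Finset.sum_sdiff hJK
  have hlam_erase : ∀ j ∈ J'.erase inf, lamMap J J' inf σ j = σ j := by
    intro j hj
    rw [Finset.mem_erase] at hj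
    unfold lamMap
    rw [if_neg hj.1, if_pos hj.2]
  have hsumτ : ∑ j ∈ J', τ j = ∑ j ∈ A, σ j := by
    have hsub : ∑ j ∈ J', τ j = (∑ j ∈ J', lamMap J J' inf σ j) - ∑ j ∈ J', eVec inf j := by
      rw [← Finset.sum_sub_distrib]; rfl
    have heV : ∑ j ∈ J', eVec inf j = 1 := by
      unfold eVec
      rw [Finset.sum_ite_eq' J' inf (fun _ => (1:ℝ)), if_pos hinf]
    have hlamsum : ∑ j ∈ J', lamMap J J' inf σ j
        = (∑ i ∈ J, σ i) + ∑ j ∈ J'.erase inf, σ j := by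
      rw [← Finset.add_sum_erase J' _ hinf]
      congr 1
      · unfold lamMap; rw [if_pos rfl]
      · exact Finset.sum_congr rfl hlam_erase
    rw [hsub, heV, hlamsum, hsum_erase]
    have : ∑ j ∈ K \ J, σ j + ∑ j ∈ J, σ j = 1 := by rw [hKsplit, hσsum]
    linarith
  -- the sum is < 1
  have hj₀pos : 0 < σ j₀ := lt_of_le_of_ne (hσnn.1 j₀) (Ne.symm hσj₀)
  have hsubJ : insert j₀ A ⊆ J := by
    intro x hx
    rcases Finset.mem_insert.mp hx with rfl | hx
    · exact hj₀J
    · exact hAJ.subset hx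
  have hbound : σ j₀ + ∑ j ∈ A, σ j ≤ ∑ j ∈ J, σ j := by
    have := Finset.sum_le_sum_of_subset_of_nonneg hsubJ
      (fun i _ _ => hσnn.1 i)
    rwa [Finset.sum_insert hj₀A] at this
  have hJle : ∑ j ∈ J, σ j ≤ 1 := by
    have h1 := Finset.sum_le_sum_of_subset_of_nonneg hJK (fun i _ _ => hσnn.1 i)
    rwa [hσsum] at h1
  have hlt : ∑ j ∈ J', τ j < 1 := by rw [hsumτ]; linarith
  -- conclude
  rintro ⟨-, hge⟩
  have hJ'ne : J' ≠ ∅ := fun hc => by simp [hc] at hinf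
  rw [contactExp, if_neg hJ'ne] at hge
  exact not_one_le_sInf (a := ∑ j ∈ J', τ j) (Set.mem_image_of_mem _ hτmem) hlt hge

end RedSing
end

section
/- Let D be a special polyhedra system and T ∈ H a stratum with T ∉ Sing(D) that has maximal contact with D. Then every singular stratum of D contains T, and the map Ψ : J ↦ J∖T is a bijection from Sing(D) onto Sing(D^T), where D^T is Hironaka's projection of D from T. -/
open scoped Pointwise

namespace RedSing

lemma PolySys.Δ_subset_suppCone (D : PolySys) {J : Finset ℕ} (hJ : J ∈ D.F.H) :
    D.Δ J ⊆ suppCone J := by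
  obtain ⟨A, hA, hΔ⟩ := D.char J hJ
  rw [hΔ, posHull]
  refine convexHull_min ?_ (suppCone_convex J)
  rintro σ ⟨a, ha, c, hc, rfl⟩
  have ha' := (hA ha).1
  exact ⟨fun j => add_nonneg (ha'.1 j) (hc.1 j),
    fun j hj => by simp [Pi.add_apply, ha'.2 j hj, hc.2 j hj]⟩

lemma sum_mem_nonneg (D : PolySys) {J : Finset ℕ} (hJ : J ∈ D.F.H) {σ : Vec}
    (hσ : σ ∈ D.Δ J) (K : Finset ℕ) : 0 ≤ ∑ j ∈ K, σ j :=
  Finset.sum_nonneg fun j _ => (D.Δ_subset_suppCone hJ hσ).1 j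

lemma bddBelow_sums (D : PolySys) {J : Finset ℕ} (hJ : J ∈ D.F.H) (K : Finset ℕ) :
    BddBelow ((fun σ => ∑ j ∈ K, σ j) '' D.Δ J) := by
  refine ⟨0, ?_⟩
  rintro x ⟨σ, hσ, rfl⟩
  exact sum_mem_nonneg D hJ hσ K

lemma one_le_sum_of_sing (D : PolySys) {J : Finset ℕ} (hJ : J ∈ Sing D) {σ : Vec}
    (hσ : σ ∈ D.Δ J) : 1 ≤ ∑ j ∈ J, σ j := by
  have hJne : J ≠ ∅ := by
    rintro rfl
    have h := hJ.2
    rw [contactExp, if_pos rfl] at h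
    linarith
  have h1 := hJ.2
  rw [contactExp, if_neg hJne] at h1
  exact h1.trans (csInf_le (bddBelow_sums D hJ.1 J) ⟨σ, hσ, rfl⟩)

lemma exists_small_T (D : PolySys) (T : Finset ℕ) (hTH : T ∈ D.F.H) (hTns : T ∉ Sing D)
    {J : Finset ℕ} (hJH : J ∈ D.F.H) (hTsubJ : T ⊆ J) :
    ∃ σ ∈ D.Δ J, ∑ i ∈ T, σ i < 1 := by
  rcases eq_or_ne T ∅ with rfl | hTne
  · obtain ⟨σ, hσ⟩ := D.nonempty J hJH
    exact ⟨σ, hσ, by simp⟩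
  · have hns : ¬ 1 ≤ contactExp T (D.Δ T) := fun h => hTns ⟨hTH, h⟩
    rw [contactExp, if_neg hTne] at hns
    push_neg at hns
    have hne : ((fun σ => ∑ j ∈ T, σ j) '' D.Δ T).Nonempty :=
      (D.nonempty T hTH).image _
    obtain ⟨x, ⟨σ', hσ', rfl⟩, hx⟩ := exists_lt_of_csInf_lt hne hns
    rw [D.compat T hTH J hJH hTsubJ] at hσ'
    obtain ⟨σ, hσ, rfl⟩ := hσ'
    refine ⟨σ, hσ, ?_⟩
    calc ∑ i ∈ T, σ i
        = ∑ j ∈ T, (fun j => if j ∈ T then σ j else 0) j := by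
          refine Finset.sum_congr rfl fun j hj => ?_
          simp [hj]
      _ < 1 := hx

lemma proj_sum {T J : Finset ℕ} (hT : T ⊆ J) (σ : Vec) :
    ∑ j ∈ J \ T, hironakaProj T J σ j
      = ((∑ j ∈ J, σ j) - ∑ i ∈ T, σ i) / (1 - ∑ i ∈ T, σ i) := by
  rw [← Finset.sum_sdiff_eq_sub hT, Finset.sum_div]
  refine Finset.sum_congr rfl fun j hj => ?_
  simp [hironakaProj, hj]

lemma proj_nonneg (D : PolySys) {T J' : Finset ℕ} (hH : J' ∪ T ∈ D.F.H)
    {τ : Vec} (hτ : τ ∈ projΔ D T J') (j : ℕ) : 0 ≤ τ j := by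
  obtain ⟨σ, ⟨hσ, hs⟩, rfl⟩ := hτ
  unfold hironakaProj
  split
  · exact div_nonneg ((D.Δ_subset_suppCone hH hσ).1 j) (by linarith)
  · exact le_refl 0

/-- If `T ∉ Sing(D)` has maximal contact with the special system `D`, then every
singular stratum contains `T` and `J ↦ J ∖ T` is a bijection from `Sing(D)` onto
`Sing(D^T)`, the singular locus of Hironaka's projection. -/
theorem maximal_contact_sing_bijection (D : PolySys) (hsp : IsSpecial D)
    (T : Finset ℕ) (hTH : T ∈ D.F.H) (hTns : T ∉ Sing D)
    (hmc : HasMaximalContact D T) :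
    (∀ J ∈ Sing D, T ⊆ J) ∧
      Set.BijOn (fun J => J \ T) (Sing D) (projSing D T) := by
  have hTsub : ∀ J ∈ Sing D, T ⊆ J := by
    intro J hJ t ht
    obtain ⟨σ, hσ, _, hne⟩ := hmc.2 J hJ (Finset.mem_coe.mpr ht)
    by_contra htJ
    exact hne ((D.Δ_subset_suppCone hJ.1 hσ).2 t htJ)
  refine ⟨hTsub, ?_, ?_, ?_⟩
  · -- MapsTo
    intro J hJ
    have hTsubJ := hTsub J hJ
    have hJT : J \ T ∪ T = J := Finset.sdiff_union_of_subset hTsubJ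
    have hJneT : J ≠ T := fun h => hTns (h ▸ hJ)
    have hJTne : J \ T ≠ ∅ := by
      intro h
      exact hJneT (Finset.Subset.antisymm (Finset.sdiff_eq_empty_iff_subset.mp h) hTsubJ)
    obtain ⟨σ₀, hσ₀, hs₀⟩ := exists_small_T D T hTH hTns hJ.1 hTsubJ
    have hproj_mem : ∀ σ ∈ D.Δ J, (∑ i ∈ T, σ i) < 1 →
        hironakaProj T J σ ∈ projΔ D T (J \ T) := by
      intro σ hσ hs
      simp only [projΔ, hJT]
      exact ⟨σ, ⟨hσ, hs⟩, rfl⟩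
    refine ⟨⟨J, ⟨hJ.1, hTsubJ⟩, rfl⟩, ⟨_, hproj_mem σ₀ hσ₀ hs₀⟩, ?_⟩
    rw [contactExp, if_neg hJTne]
    refine le_csInf (((Set.nonempty_of_mem (hproj_mem σ₀ hσ₀ hs₀))).image _) ?_
    rintro x ⟨τ, hτ, rfl⟩
    simp only [projΔ, hJT] at hτ
    obtain ⟨σ, ⟨hσ, hs⟩, rfl⟩ := hτ
    dsimp only
    rw [proj_sum hTsubJ]
    rw [le_div_iff₀ (by linarith)]
    have h1 := one_le_sum_of_sing D hJ hσ
    linarith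
  · -- InjOn
    intro J₁ h₁ J₂ h₂ h
    simp only at h
    rw [← Finset.sdiff_union_of_subset (hTsub J₁ h₁),
      ← Finset.sdiff_union_of_subset (hTsub J₂ h₂), h]
  · -- SurjOn
    rintro J' ⟨⟨J₀, ⟨hJ₀H, hTJ₀⟩, rfl⟩, hpne, hge⟩
    have hJT : J₀ \ T ∪ T = J₀ := Finset.sdiff_union_of_subset hTJ₀
    have hJ'ne : J₀ \ T ≠ ∅ := by
      intro h
      rw [h, contactExp, if_pos rfl] at hge
      linarith
    have hJ₀ne : J₀ ≠ ∅ := by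
      intro h
      exact hJ'ne (by simp [h])
    have hsing : J₀ ∈ Sing D := by
      refine ⟨hJ₀H, ?_⟩
      rw [contactExp, if_neg hJ₀ne]
      refine le_csInf ((D.nonempty J₀ hJ₀H).image _) ?_
      rintro x ⟨σ, hσ, rfl⟩
      have hnn : ∀ j, 0 ≤ σ j := (D.Δ_subset_suppCone hJ₀H hσ).1
      rcases le_or_gt 1 (∑ i ∈ T, σ i) with hs | hs
      · exact hs.trans (Finset.sum_le_sum_of_subset_of_nonneg hTJ₀ fun j _ _ => hnn j)
      · have hτ : hironakaProj T J₀ σ ∈ projΔ D T (J₀ \ T) := by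
          simp only [projΔ, hJT]
          exact ⟨σ, ⟨hσ, hs⟩, rfl⟩
        have hbdd : BddBelow ((fun τ => ∑ j ∈ J₀ \ T, τ j) '' projΔ D T (J₀ \ T)) := by
          refine ⟨0, ?_⟩
          rintro x ⟨τ, hτ', rfl⟩
          exact Finset.sum_nonneg fun j _ => proj_nonneg D (by rw [hJT]; exact hJ₀H) hτ' j
        have hle : contactExp (J₀ \ T) (projΔ D T (J₀ \ T))
            ≤ ∑ j ∈ J₀ \ T, hironakaProj T J₀ σ j := by
          rw [contactExp, if_neg hJ'ne]
          exact csInf_le hbdd ⟨_, hτ, rfl⟩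
        have h1 : (1 : ℝ) ≤ ((∑ j ∈ J₀, σ j) - ∑ i ∈ T, σ i) / (1 - ∑ i ∈ T, σ i) := by
          rw [← proj_sum hTJ₀]
          exact hge.trans hle
        rw [le_div_iff₀ (by linarith)] at h1
        linarith
    exact ⟨J₀, hsing, rfl⟩

end RedSing
end
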